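/- Let d ≥ 2 and let Θ be a growth function with Θ(1) = 1. There is a constant C > 0 depending only on d and Θ such that for every probability density ρ ∈ Y^Θ(ℝ^d) and every x ∈ ℝ^d, ∫_{ℝ^d} |x − q|^{1−d} ρ(q) dq ≤ C (1 + ‖ρ‖_{Y^Θ}). In particular, the Newtonian force field E_ρ satisfies ‖E_ρ‖_{L^∞(ℝ^d)} ≤ C (1 + ‖ρ‖_{Y^Θ}). -/

import Mathlib

open MeasureTheory Set Metric
open scoped ENNReal

noncomputable section

/-- The Newtonian force field (with normalizing constant `1`) of a density `ρ`. -/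
def force (d : ℕ) (ρ : EuclideanSpace ℝ (Fin d) → ℝ) (x : EuclideanSpace ℝ (Fin d)) :
    EuclideanSpace ℝ (Fin d) :=
  ∫ q, (ρ q / ‖x - q‖ ^ d) • (x - q)

/-- The Yudovich norm `sup_{1 ≤ r < ∞} ‖h‖_{L^r}/Θ(r)`. -/
def Ynorm (d : ℕ) (Θ : ℝ → ℝ) (h : EuclideanSpace ℝ (Fin d) → ℝ) : ℝ :=
  sSup {x : ℝ | ∃ r : ℝ, 1 ≤ r ∧
    x = (eLpNorm h (ENNReal.ofReal r) volume).toReal / Θ r}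

/-- Membership in the Yudovich space `Y^Θ(ℝ^d)`. -/
def MemY (d : ℕ) (Θ : ℝ → ℝ) (h : EuclideanSpace ℝ (Fin d) → ℝ) : Prop :=
  (∀ r : ℝ, 1 ≤ r → MemLp h (ENNReal.ofReal r) volume) ∧
    BddAbove {x : ℝ | ∃ r : ℝ, 1 ≤ r ∧
      x = (eLpNorm h (ENNReal.ofReal r) volume).toReal / Θ r}

/-- Finiteness of the integral of `‖y‖ ^ s` on the unit ball, for `-d < s < 0`. -/
lemma finite_kernel_aux (d : ℕ) (hd : 2 ≤ d) {s : ℝ} (hs : -(d : ℝ) < s) (hs0 : s < 0) :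
    (∫⁻ y in ball (0 : EuclideanSpace ℝ (Fin d)) 1, ENNReal.ofReal (‖y‖ ^ s)) < ⊤ := by
  classical
  haveI : Nonempty (Fin d) := ⟨⟨0, by omega⟩⟩
  set E := EuclideanSpace ℝ (Fin d)
  set A : ℕ → Set E := fun n => ball (0 : E) ((2 : ℝ)⁻¹ ^ n) \ ball 0 ((2 : ℝ)⁻¹ ^ (n + 1))
    with hAdef
  have hcover : ball (0 : E) 1 ⊆ {0} ∪ ⋃ n, A n := by
    intro y hy
    rcases eq_or_ne y 0 with h0 | h0
    · exact Or.inl h0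
    right
    have hy1 : ‖y‖ < 1 := mem_ball_zero_iff.mp hy
    have hypos : 0 < ‖y‖ := norm_pos_iff.mpr h0
    have hex : ∃ n : ℕ, (2 : ℝ)⁻¹ ^ (n + 1) ≤ ‖y‖ := by
      obtain ⟨n, hn⟩ := exists_pow_lt_of_lt_one hypos (by norm_num : (2 : ℝ)⁻¹ < 1)
      exact ⟨n, (pow_le_pow_of_le_one (by norm_num) (by norm_num) (Nat.le_succ n)).trans hn.le⟩
    set n := Nat.find hex with hn
    have hn1 : (2 : ℝ)⁻¹ ^ (n + 1) ≤ ‖y‖ := Nat.find_spec hex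
    have hn2 : ‖y‖ < (2 : ℝ)⁻¹ ^ n := by
      rcases Nat.eq_zero_or_pos n with h | h
      · rw [h]; simpa using hy1
      · obtain ⟨k, hk⟩ := Nat.exists_eq_add_of_lt h
        have hmin := Nat.find_min hex (m := n - 1) (by omega)
        push_neg at hmin
        have : n - 1 + 1 = n := by omega
        rwa [this] at hmin
    refine mem_iUnion.mpr ⟨n, ⟨mem_ball_zero_iff.mpr hn2, fun hmem => ?_⟩⟩
    exact absurd (mem_ball_zero_iff.mp hmem) (not_lt.mpr hn1)
  have hball : ∀ n : ℕ, volume (ball (0 : E) ((2 : ℝ)⁻¹ ^ n)) =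
      ENNReal.ofReal (((2 : ℝ)⁻¹ ^ n) ^ d) * volume (ball (0 : E) 1) := by
    intro n
    rw [Measure.addHaar_ball volume _ (by positivity)]
    congr 2
    rw [finrank_euclideanSpace, Fintype.card_fin]
  set r : ℝ≥0∞ := ENNReal.ofReal ((2 : ℝ)⁻¹ ^ (s + d)) with hrdef
  have hbound : ∀ n : ℕ, (∫⁻ y in A n, ENNReal.ofReal (‖y‖ ^ s)) ≤
      ENNReal.ofReal ((2 : ℝ)⁻¹ ^ s) * volume (ball (0 : E) 1) * r ^ n := by
    intro n
    have h1 : (∫⁻ y in A n, ENNReal.ofReal (‖y‖ ^ s)) ≤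
        ENNReal.ofReal (((2 : ℝ)⁻¹ ^ (n + 1) : ℝ) ^ s) * volume (A n) := by
      refine (setLIntegral_mono' (measurableSet_ball.diff measurableSet_ball) ?_).trans
        (le_of_eq (setLIntegral_const _ _))
      intro y hy
      have hylb : (2 : ℝ)⁻¹ ^ (n + 1) ≤ ‖y‖ := by
        by_contra hcon
        exact hy.2 (mem_ball_zero_iff.mpr (not_le.mp hcon))
      exact ENNReal.ofReal_le_ofReal
        (Real.rpow_le_rpow_of_nonpos (by positivity) hylb hs0.le)
    have hkey : (((2 : ℝ)⁻¹ ^ (n + 1) : ℝ) ^ s) * (((2 : ℝ)⁻¹ ^ n : ℝ) ^ d) =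
        (2 : ℝ)⁻¹ ^ s * ((2 : ℝ)⁻¹ ^ (s + d)) ^ n := by
      rw [← pow_mul, ← Real.rpow_natCast ((2 : ℝ)⁻¹) (n + 1),
        ← Real.rpow_natCast ((2 : ℝ)⁻¹) (n * d),
        ← Real.rpow_mul (by norm_num : (0 : ℝ) ≤ 2⁻¹),
        ← Real.rpow_add (by norm_num : (0 : ℝ) < 2⁻¹),
        ← Real.rpow_natCast ((2 : ℝ)⁻¹ ^ (s + d)) n,
        ← Real.rpow_mul (by norm_num : (0 : ℝ) ≤ 2⁻¹),
        ← Real.rpow_add (by norm_num : (0 : ℝ) < 2⁻¹)]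
      congr 1
      push_cast
      ring
    calc (∫⁻ y in A n, ENNReal.ofReal (‖y‖ ^ s))
        ≤ ENNReal.ofReal (((2 : ℝ)⁻¹ ^ (n + 1) : ℝ) ^ s) * volume (A n) := h1
      _ ≤ ENNReal.ofReal (((2 : ℝ)⁻¹ ^ (n + 1) : ℝ) ^ s) *
            (ENNReal.ofReal (((2 : ℝ)⁻¹ ^ n) ^ d) * volume (ball (0 : E) 1)) := by
          gcongr
          rw [← hball n]
          exact measure_mono diff_subset
      _ = ENNReal.ofReal ((2 : ℝ)⁻¹ ^ s) * volume (ball (0 : E) 1) * r ^ n := by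
          rw [← mul_assoc, ← ENNReal.ofReal_mul (by positivity), hkey,
            ENNReal.ofReal_mul (by positivity), hrdef,
            ← ENNReal.ofReal_pow (by positivity)]
          ring
  have hr1 : r < 1 := by
    rw [hrdef]
    refine ENNReal.ofReal_lt_one.mpr ?_
    exact Real.rpow_lt_one (by norm_num) (by norm_num) (by linarith)
  calc (∫⁻ y in ball (0 : E) 1, ENNReal.ofReal (‖y‖ ^ s))
      ≤ ∫⁻ y in ({0} ∪ ⋃ n, A n : Set E), ENNReal.ofReal (‖y‖ ^ s) :=
        lintegral_mono_set hcover
    _ ≤ (∫⁻ y in ({0} : Set E), ENNReal.ofReal (‖y‖ ^ s)) +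
          ∫⁻ y in ⋃ n, A n, ENNReal.ofReal (‖y‖ ^ s) := lintegral_union_le _ _ _
    _ ≤ 0 + ∑' n, ∫⁻ y in A n, ENNReal.ofReal (‖y‖ ^ s) := by
        gcongr
        · rw [lintegral_singleton]
          simp [Real.zero_rpow hs0.ne]
        · exact lintegral_iUnion_le _ _
    _ ≤ 0 + ∑' n, ENNReal.ofReal ((2 : ℝ)⁻¹ ^ s) * volume (ball (0 : E) 1) * r ^ n := by
        gcongr with n
        exact hbound n
    _ = ENNReal.ofReal ((2 : ℝ)⁻¹ ^ s) * volume (ball (0 : E) 1) * (1 - r)⁻¹ := by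
        rw [zero_add, ENNReal.tsum_mul_left, ENNReal.tsum_geometric]
    _ < ⊤ := by
        refine ENNReal.mul_lt_top (ENNReal.mul_lt_top ENNReal.ofReal_lt_top
          measure_ball_lt_top) ?_
        rw [ENNReal.inv_lt_top]
        exact tsub_pos_of_lt hr1

/-- Uniform bound on the Newtonian force field of a Yudovich probability density:
`∫ |x − q|^{1−d} ρ(q) dq ≤ C(1 + ‖ρ‖_{Y^Θ})`, hence `‖E_ρ‖_∞ ≤ C(1 + ‖ρ‖_{Y^Θ})`. -/
theorem stmt6 (d : ℕ) (hd : 2 ≤ d) (Θ : ℝ → ℝ)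
    (hΘpos : ∀ r : ℝ, 0 ≤ r → 0 < Θ r) (hΘmono : MonotoneOn Θ (Ici 0)) (hΘ1 : Θ 1 = 1) :
    ∃ C : ℝ, 0 < C ∧ ∀ ρ : EuclideanSpace ℝ (Fin d) → ℝ,
      (∀ x, 0 ≤ ρ x) → (∫ x, ρ x) = 1 → MemY d Θ ρ →
      (∀ x : EuclideanSpace ℝ (Fin d),
        (∫⁻ q, ENNReal.ofReal (‖x - q‖ ^ (1 - (d:ℝ)) * ρ q)) ≤
          ENNReal.ofReal (C * (1 + Ynorm d Θ ρ))) ∧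
      eLpNorm (force d ρ) ⊤ volume ≤ ENNReal.ofReal (C * (1 + Ynorm d Θ ρ)) := by
  classical
  haveI : Nonempty (Fin d) := ⟨⟨0, by omega⟩⟩
  set E := EuclideanSpace ℝ (Fin d)
  have hD2 : (2 : ℝ) ≤ (d : ℝ) := by exact_mod_cast hd
  set p : ℝ := 2 * (d : ℝ) with hpdef
  have hp1 : 1 < p := by rw [hpdef]; nlinarith
  set q : ℝ := p / (p - 1) with hqdef
  have hpq : p.HolderConjugate q := Real.HolderConjugate.conjExponent hp1
  have hqpos : 0 < q := hpq.symm.pos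
  set s : ℝ := (1 - (d : ℝ)) * q with hsdef
  have hs0 : s < 0 := mul_neg_of_neg_of_pos (by linarith) hqpos
  have hs : -(d : ℝ) < s := by
    rw [hsdef, hqdef, mul_div_assoc']
    rw [lt_div_iff₀ (by nlinarith : (0 : ℝ) < p - 1)]
    rw [hpdef]
    nlinarith
  have hA := finite_kernel_aux d hd hs hs0
  set A : ℝ≥0∞ := ∫⁻ y in ball (0 : E) 1, ENNReal.ofReal (‖y‖ ^ s) with hAdef
  have hAq : A ^ (1 / q) ≠ ⊤ := ENNReal.rpow_ne_top_of_nonneg (by positivity) hA.ne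
  set K : ℝ := (A ^ (1 / q)).toReal with hKdef
  have hK0 : 0 ≤ K := ENNReal.toReal_nonneg
  have hΘp : 0 < Θ p := hΘpos p (by positivity)
  refine ⟨1 + K * Θ p, by positivity, fun ρ hρ hρ1 hY => ?_⟩
  set C : ℝ := 1 + K * Θ p with hCdef
  have hint : Integrable ρ := by
    have h := hY.1 1 le_rfl
    rwa [ENNReal.ofReal_one, memLp_one_iff_integrable] at h
  have hmeasρ : AEMeasurable ρ := hint.aestronglyMeasurable.aemeasurable
  have hY0 : 0 ≤ Ynorm d Θ ρ := by
    have hmem := le_csSup hY.2 ⟨1, le_rfl, rfl⟩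
    refine le_trans ?_ hmem
    exact div_nonneg ENNReal.toReal_nonneg (hΘpos 1 zero_le_one).le
  have hYle : (eLpNorm ρ (ENNReal.ofReal p) volume).toReal ≤ Θ p * Ynorm d Θ ρ := by
    have hmem := le_csSup hY.2 ⟨p, hp1.le, rfl⟩
    rw [div_le_iff₀ hΘp] at hmem
    exact hmem.trans_eq (mul_comm _ _)
  have hsnorm : eLpNorm ρ (ENNReal.ofReal p) volume ≤
      ENNReal.ofReal (Θ p * Ynorm d Θ ρ) := by
    have hfin : eLpNorm ρ (ENNReal.ofReal p) volume ≠ ⊤ := (hY.1 p hp1.le).2.ne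
    rw [← ENNReal.ofReal_toReal hfin]
    exact ENNReal.ofReal_le_ofReal hYle
  have hmain : ∀ x : EuclideanSpace ℝ (Fin d),
      (∫⁻ qq, ENNReal.ofReal (‖x - qq‖ ^ (1 - (d : ℝ)) * ρ qq)) ≤
        ENNReal.ofReal (C * (1 + Ynorm d Θ ρ)) := by
    intro x
    set k : E → ℝ≥0∞ := fun a => ENNReal.ofReal (‖x - a‖ ^ (1 - (d : ℝ))) with hkdef
    set g : E → ℝ≥0∞ := fun a => ENNReal.ofReal (ρ a) with hgdef
    have hkmeas : Measurable k := by
      exact ((continuous_const.sub continuous_id).norm.measurable.pow_const _).ennreal_ofReal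
    have hgmeas : AEMeasurable g := ENNReal.measurable_ofReal.comp_aemeasurable hmeasρ
    have hInt_eq : ∀ a, ENNReal.ofReal (‖x - a‖ ^ (1 - (d : ℝ)) * ρ a) = k a * g a := by
      intro a
      exact ENNReal.ofReal_mul (Real.rpow_nonneg (norm_nonneg _) _)
    have hsplit : (∫⁻ a, ENNReal.ofReal (‖x - a‖ ^ (1 - (d : ℝ)) * ρ a)) =
        (∫⁻ a in ball x 1, k a * g a) + (∫⁻ a in (ball x 1)ᶜ, k a * g a) := by
      simp_rw [hInt_eq]
      exact (lintegral_add_compl _ measurableSet_ball).symm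
    have hfar : (∫⁻ a in (ball x 1)ᶜ, k a * g a) ≤ 1 := by
      have hmono : ∀ a ∈ (ball x 1)ᶜ, k a * g a ≤ g a := by
        intro a ha
        have h1 : (1 : ℝ) ≤ ‖x - a‖ := by
          rw [mem_compl_iff, mem_ball, not_lt] at ha
          calc (1 : ℝ) ≤ dist a x := ha
            _ = ‖x - a‖ := by rw [dist_eq_norm, ← norm_neg]; congr 1; abel
        calc k a * g a ≤ 1 * g a := by
              gcongr
              refine ENNReal.ofReal_le_one.mpr ?_
              exact Real.rpow_le_one_of_one_le_of_nonpos h1 (by linarith)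
          _ = g a := one_mul _
      calc (∫⁻ a in (ball x 1)ᶜ, k a * g a) ≤ ∫⁻ a in (ball x 1)ᶜ, g a :=
            setLIntegral_mono' measurableSet_ball.compl hmono
        _ ≤ ∫⁻ a, g a := setLIntegral_le_lintegral _ _
        _ = ENNReal.ofReal (∫ a, ρ a) :=
            (ofReal_integral_eq_lintegral_ofReal hint
              (Filter.Eventually.of_forall hρ)).symm
        _ = 1 := by rw [hρ1, ENNReal.ofReal_one]
    have hnear : (∫⁻ a in ball x 1, k a * g a) ≤
        A ^ (1 / q) * eLpNorm ρ (ENNReal.ofReal p) volume := by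
      have hholder := ENNReal.lintegral_mul_le_Lp_mul_Lq (volume.restrict (ball x 1))
        hpq.symm hkmeas.aemeasurable hgmeas.restrict
      refine hholder.trans ?_
      have hfac1 : (∫⁻ a in ball x 1, k a ^ q) ^ (1 / q) = A ^ (1 / q) := by
        congr 1
        have hτ : MeasurePreserving (fun a : E => x - a) volume volume :=
          Measure.measurePreserving_sub_left volume x
        have hemb : MeasurableEmbedding (fun a : E => x - a) :=
          (MeasurableEquiv.subLeft x).measurableEmbedding
        have hpre : (fun a : E => x - a) ⁻¹' (ball 0 1) = ball x 1 := by
          ext a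
          simp only [mem_preimage, mem_ball, dist_eq_norm, sub_zero]
          rw [← norm_neg (x - a)]
          constructor <;> · intro h; simpa only [neg_sub, ← mem_ball_iff_norm, mem_ball] using h
        calc (∫⁻ a in ball x 1, k a ^ q)
            = ∫⁻ a in ball x 1, ENNReal.ofReal (‖x - a‖ ^ s) := by
              refine setLIntegral_congr_fun measurableSet_ball
                (fun a _ => ?_)
              rw [hkdef]
              dsimp only
              rw [ENNReal.ofReal_rpow_of_nonneg (Real.rpow_nonneg (norm_nonneg _) _)
                hqpos.le, ← Real.rpow_mul (norm_nonneg _), hsdef]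
          _ = ∫⁻ y in ball (0 : E) 1, ENNReal.ofReal (‖y‖ ^ s) := by
              rw [← hpre]
              exact hτ.setLIntegral_comp_preimage_emb hemb (fun y => ENNReal.ofReal (‖y‖ ^ s)) (ball 0 1)
          _ = A := hAdef.symm
      have hfac2 : (∫⁻ a in ball x 1, g a ^ p) ^ (1 / p) ≤
          eLpNorm ρ (ENNReal.ofReal p) volume := by
        have h1 : (∫⁻ a in ball x 1, g a ^ p) ≤ ∫⁻ a, g a ^ p :=
          setLIntegral_le_lintegral _ _
        have h2 : eLpNorm ρ (ENNReal.ofReal p) volume = (∫⁻ a, g a ^ p) ^ (1 / p) := by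
          rw [eLpNorm_eq_lintegral_rpow_enorm_toReal
            (by simp [ENNReal.ofReal_eq_zero]; linarith)
            ENNReal.ofReal_ne_top]
          rw [ENNReal.toReal_ofReal (by positivity)]
          congr 1
          refine lintegral_congr fun a => ?_
          rw [hgdef]
          dsimp only
          rw [← Real.enorm_eq_ofReal (hρ a)]
        rw [h2]
        exact ENNReal.rpow_le_rpow h1 (by positivity)
      exact mul_le_mul' hfac1.le hfac2
    have hAK : A ^ (1 / q) = ENNReal.ofReal K := by
      rw [hKdef, ENNReal.ofReal_toReal hAq]
    calc (∫⁻ qq, ENNReal.ofReal (‖x - qq‖ ^ (1 - (d : ℝ)) * ρ qq))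
        = (∫⁻ a in ball x 1, k a * g a) + (∫⁻ a in (ball x 1)ᶜ, k a * g a) := hsplit
      _ ≤ ENNReal.ofReal K * ENNReal.ofReal (Θ p * Ynorm d Θ ρ) + 1 := by
          refine add_le_add (hnear.trans ?_) hfar
          rw [hAK]
          exact mul_le_mul_right hsnorm _
      _ = ENNReal.ofReal (K * (Θ p * Ynorm d Θ ρ) + 1) := by
          rw [← ENNReal.ofReal_mul hK0, ← ENNReal.ofReal_one,
            ← ENNReal.ofReal_add (by positivity) zero_le_one]
      _ ≤ ENNReal.ofReal (C * (1 + Ynorm d Θ ρ)) := by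
          refine ENNReal.ofReal_le_ofReal ?_
          rw [hCdef]
          nlinarith [hΘp.le, hY0, hK0]
  refine ⟨hmain, ?_⟩
  rw [eLpNorm_exponent_top, eLpNormEssSup]
  refine essSup_le_of_ae_le _ (Filter.Eventually.of_forall fun x => ?_)
  have hnorm : ∀ a : E, ‖(ρ a / ‖x - a‖ ^ d) • (x - a)‖ =
      ‖x - a‖ ^ (1 - (d : ℝ)) * ρ a := by
    intro a
    rw [norm_smul, Real.norm_eq_abs, abs_div, abs_of_nonneg (hρ a),
      abs_of_nonneg (by positivity : (0 : ℝ) ≤ ‖x - a‖ ^ d)]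
    rcases eq_or_ne (‖x - a‖) 0 with h0 | h0
    · rw [h0, Real.zero_rpow (by nlinarith : (1 : ℝ) - (d : ℝ) ≠ 0)]
      simp [zero_pow (by omega : d ≠ 0)]
    · have hpos : 0 < ‖x - a‖ := lt_of_le_of_ne (norm_nonneg _) (Ne.symm h0)
      rw [Real.rpow_sub hpos, Real.rpow_one, Real.rpow_natCast]
      field_simp
  calc (‖force d ρ x‖₊ : ℝ≥0∞)
      ≤ ∫⁻ a, ‖(ρ a / ‖x - a‖ ^ d) • (x - a)‖₊ := enorm_integral_le_lintegral_enorm _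
    _ = ∫⁻ a, ENNReal.ofReal (‖x - a‖ ^ (1 - (d : ℝ)) * ρ a) := by
        refine lintegral_congr fun a => ?_
        rw [← enorm_eq_nnnorm, ← ofReal_norm, hnorm a]
    _ ≤ ENNReal.ofReal (C * (1 + Ynorm d Θ ρ)) := hmain x
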